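/- Under the same online regression setup (y_t = θ*ᵀ x_t, ŷ_t = θ̂_tᵀ x_t, e_t = ŷ_t − y_t, update θ̂_{t+1} = θ̂_t − (α_t/(m + x_tᵀx_t)) e_t x_t) with m > 0, and constants 0 < α_low ≤ α_t ≤ α_high < 2, and with ‖x_t‖ ≤ X for all t, the error is square-summable: ∑_{t=1}^∞ e_t² ≤ c · ‖θ̂_1 − θ*‖² where c = (m + X²)/(α_low(2 − α_high)). -/

import Mathlib

open RealInnerProductSpace

/-- Square-summability of the prediction error in online regression with
normalized gradient descent. -/
theorem online_regression_error_square_summable (n : ℕ)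
    (θstar : EuclideanSpace ℝ (Fin n)) (θh x : ℕ → EuclideanSpace ℝ (Fin n))
    (α : ℕ → ℝ) (m X αlow αhigh : ℝ) (hm : 0 < m)
    (hαlow : 0 < αlow) (hαhigh : αhigh < 2)
    (hα : ∀ t, αlow ≤ α t ∧ α t ≤ αhigh)
    (hx : ∀ t, ‖x t‖ ≤ X)
    (e : ℕ → ℝ) (he : ∀ t, e t = ⟪θh t - θstar, x t⟫)
    (hupd : ∀ t, θh (t + 1) = θh t - (α t / (m + ‖x t‖ ^ 2)) • (e t • x t)) :
    ∑' t : ℕ, (e (t + 1)) ^ 2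
      ≤ ((m + X ^ 2) / (αlow * (2 - αhigh))) * ‖θh 1 - θstar‖ ^ 2 := by
  have hX : 0 ≤ X := le_trans (norm_nonneg _) (hx 0)
  set c : ℝ := (m + X ^ 2) / (αlow * (2 - αhigh)) with hc
  have hden : 0 < αlow * (2 - αhigh) := mul_pos hαlow (by linarith)
  have hcpos : 0 < c := div_pos (by positivity) hden
  have key : ∀ t, e t ^ 2 ≤ c * (‖θh t - θstar‖ ^ 2 - ‖θh (t + 1) - θstar‖ ^ 2) := by
    intro t
    set s : ℝ := ‖x t‖ ^ 2 with hs
    have hs0 : 0 ≤ s := by positivity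
    have hms : 0 < m + s := by linarith
    have hsX : s ≤ X ^ 2 := by
      have := hx t
      nlinarith [norm_nonneg (x t)]
    obtain ⟨hα1, hα2⟩ := hα t
    have ha0 : 0 < α t := lt_of_lt_of_le hαlow hα1
    set β : ℝ := α t / (m + s) * e t with hβ
    have hupd' : θh (t + 1) - θstar = (θh t - θstar) - β • x t := by
      rw [hupd t, smul_smul]
      abel
    have hexp : ‖θh (t + 1) - θstar‖ ^ 2
        = ‖θh t - θstar‖ ^ 2 - 2 * (β * e t) + β ^ 2 * s := by
      rw [hupd', @norm_sub_sq_real, real_inner_smul_right, ← he t,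
        norm_smul, mul_pow]
      simp [hs, sq_abs]
    -- main inequality
    have h1 : α t * s / (m + s) ≤ αhigh := by
      rw [div_le_iff₀ hms]
      nlinarith
    have h2 : αlow / (m + X ^ 2) ≤ α t / (m + s) :=
      div_le_div₀ ha0.le hα1 hms (by linarith)
    have hprod : αlow / (m + X ^ 2) * (2 - αhigh)
        ≤ α t / (m + s) * (2 - α t * s / (m + s)) := by
      apply mul_le_mul h2 (by linarith) (by linarith)
      positivity
    have key0 : e t ^ 2 * (αlow * (2 - αhigh) / (m + X ^ 2))
        ≤ 2 * (β * e t) - β ^ 2 * s := by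
      have expand : 2 * (β * e t) - β ^ 2 * s
          = α t / (m + s) * (2 - α t * s / (m + s)) * e t ^ 2 := by
        rw [hβ]; field_simp
      rw [expand]
      have := mul_le_mul_of_nonneg_left hprod (sq_nonneg (e t))
      calc e t ^ 2 * (αlow * (2 - αhigh) / (m + X ^ 2))
          = e t ^ 2 * (αlow / (m + X ^ 2) * (2 - αhigh)) := by ring
        _ ≤ e t ^ 2 * (α t / (m + s) * (2 - α t * s / (m + s))) := this
        _ = α t / (m + s) * (2 - α t * s / (m + s)) * e t ^ 2 := by ring
    have hfin : e t ^ 2 ≤ c * (2 * (β * e t) - β ^ 2 * s) := by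
      have h3 : c * (e t ^ 2 * (αlow * (2 - αhigh) / (m + X ^ 2))) = e t ^ 2 := by
        have h2ne : (2 - αhigh) ≠ 0 := by linarith
        rw [hc]; field_simp
      calc e t ^ 2 = c * (e t ^ 2 * (αlow * (2 - αhigh) / (m + X ^ 2))) := h3.symm
        _ ≤ c * (2 * (β * e t) - β ^ 2 * s) :=
            mul_le_mul_of_nonneg_left key0 hcpos.le
    rw [hexp]
    calc e t ^ 2 ≤ c * (2 * (β * e t) - β ^ 2 * s) := hfin
      _ = c * (‖θh t - θstar‖ ^ 2
            - (‖θh t - θstar‖ ^ 2 - 2 * (β * e t) + β ^ 2 * s)) := by ring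
  apply Real.tsum_le_of_sum_range_le (fun t => sq_nonneg _)
  intro N
  calc ∑ i ∈ Finset.range N, e (i + 1) ^ 2
      ≤ ∑ i ∈ Finset.range N,
          c * (‖θh (i + 1) - θstar‖ ^ 2 - ‖θh (i + 2) - θstar‖ ^ 2) :=
        Finset.sum_le_sum fun i _ => key (i + 1)
    _ = c * (‖θh 1 - θstar‖ ^ 2 - ‖θh (N + 1) - θstar‖ ^ 2) := by
        rw [← Finset.mul_sum, Finset.sum_range_sub' (fun i => ‖θh (i + 1) - θstar‖ ^ 2)]
    _ ≤ c * ‖θh 1 - θstar‖ ^ 2 := by nlinarith [sq_nonneg ‖θh (N + 1) - θstar‖, hcpos]
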